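/- Under the assumptions of the PSN convergence setup with quadratic one-step analysis, the key inequality E[f(x^{k+1}) − f(x^k) | x^k] ≤ −(c/b − c/(2b²))‖z^k‖² + (λθ(c²−c)/(2b²))‖z^k‖² ≤ −(c/(2b))‖z^k‖² holds whenever b ≥ (c−1)λθ + 1, where z^k = (E[(M_Ŝ)⁻¹])^{1/2} ∇f(x^k). -/

import Mathlib

open Matrix BigOperators Finset

noncomputable section

/-- `A_S`: zero out entries of `A` outside rows/columns indexed by `S`. -/
def zeroPad {n : ℕ} (A : Matrix (Fin n) (Fin n) ℝ) (S : Finset (Fin n)) :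
    Matrix (Fin n) (Fin n) ℝ :=
  Matrix.of fun i j => if i ∈ S ∧ j ∈ S then A i j else 0

/-- `(M_S)⁻¹`: invert the principal submatrix `M_{SS}` in place, zeros elsewhere. -/
def inPlaceInv {n : ℕ} (M : Matrix (Fin n) (Fin n) ℝ) (S : Finset (Fin n)) :
    Matrix (Fin n) (Fin n) ℝ :=
  Matrix.of fun i j =>
    if hi : i ∈ S then
      if hj : j ∈ S then
        (M.submatrix (fun a : {x // x ∈ S} => (a : Fin n))
            (fun a : {x // x ∈ S} => (a : Fin n)))⁻¹ ⟨i, hi⟩ ⟨j, hj⟩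
      else 0
    else 0

/-- The positive semidefinite square root of a positive semidefinite matrix, as defined in
Mathlib (December 2024) under this name; it has since been removed from Mathlib. -/
noncomputable def Matrix.PosSemidef.sqrt {n : Type*} [Fintype n] [DecidableEq n]
    {A : Matrix n n ℝ} (hA : A.PosSemidef) : Matrix n n ℝ :=
  hA.1.eigenvectorUnitary.1 * diagonal ((↑) ∘ (√·) ∘ hA.1.eigenvalues) *
  (star hA.1.eigenvectorUnitary : Matrix n n ℝ)

lemma Matrix.PosSemidef.posSemidef_sqrt {n : Type*} [Fintype n] [DecidableEq n]
    {A : Matrix n n ℝ} (hA : A.PosSemidef) : hA.sqrt.PosSemidef := by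
  have hD : (diagonal ((↑) ∘ (√·) ∘ hA.1.eigenvalues) : Matrix n n ℝ).PosSemidef :=
    PosSemidef.diagonal fun i => by simp [Real.sqrt_nonneg]
  have := hD.mul_mul_conjTranspose_same (hA.1.eigenvectorUnitary : Matrix n n ℝ)
  rw [Matrix.PosSemidef.sqrt, Matrix.star_eq_conjTranspose]
  exact this

lemma Matrix.PosSemidef.sqrt_mul_self {n : Type*} [Fintype n] [DecidableEq n]
    {A : Matrix n n ℝ} (hA : A.PosSemidef) : hA.sqrt * hA.sqrt = A := by
  have hDD : (diagonal ((↑) ∘ (√·) ∘ hA.1.eigenvalues) : Matrix n n ℝ) *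
      diagonal ((↑) ∘ (√·) ∘ hA.1.eigenvalues) = diagonal (RCLike.ofReal ∘ hA.1.eigenvalues) := by
    rw [diagonal_mul_diagonal]
    congr 1; funext i
    simp [Real.mul_self_sqrt (hA.eigenvalues_nonneg i)]
  have key : hA.sqrt * hA.sqrt = (hA.1.eigenvectorUnitary : Matrix n n ℝ) *
      ((diagonal ((↑) ∘ (√·) ∘ hA.1.eigenvalues) : Matrix n n ℝ) *
      diagonal ((↑) ∘ (√·) ∘ hA.1.eigenvalues)) * (star hA.1.eigenvectorUnitary : Matrix n n ℝ) := by
    simp only [Matrix.PosSemidef.sqrt, Matrix.mul_assoc]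
    rw [← Matrix.mul_assoc (star hA.1.eigenvectorUnitary : Matrix n n ℝ), Unitary.coe_star_mul_self,
      Matrix.one_mul]
  rw [key, hDD]
  conv_rhs => rw [hA.1.spectral_theorem]
  rw [Unitary.conjStarAlgAut_apply]

/- ### Auxiliary lemmas -/

lemma psn_rayleigh {n : ℕ} [Nonempty (Fin n)] {Y : Matrix (Fin n) (Fin n) ℝ} (hY : Y.IsHermitian)
    (x : Fin n → ℝ) : x ⬝ᵥ (Y *ᵥ x) ≤ (⨆ i, hY.eigenvalues i) * (x ⬝ᵥ x) := by
  set lam := ⨆ i, hY.eigenvalues i with hlam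
  have hle : ∀ i, hY.eigenvalues i ≤ lam := fun i =>
    le_ciSup (Set.Finite.bddAbove (Set.finite_range _)) i
  set bb := hY.eigenvectorBasis with hbb
  have hinner : ∀ u v : Fin n → ℝ, u ⬝ᵥ v =
      ∑ i, (u ⬝ᵥ (bb i : Fin n → ℝ)) * ((bb i : Fin n → ℝ) ⬝ᵥ v) := by
    intro u v
    have := bb.sum_inner_mul_inner ((WithLp.equiv 2 (Fin n → ℝ)).symm u)
      ((WithLp.equiv 2 (Fin n → ℝ)).symm v)
    simp only [PiLp.inner_apply, RCLike.inner_apply, conj_trivial] at this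
    simpa [dotProduct, mul_comm] using this.symm
  have hev : ∀ i, (bb i : Fin n → ℝ) ⬝ᵥ (Y *ᵥ x) = hY.eigenvalues i * ((bb i : Fin n → ℝ) ⬝ᵥ x) := by
    intro i
    rw [Matrix.dotProduct_mulVec, ← Matrix.mulVec_transpose]
    have ht : Yᵀ = Y := by
      have := hY.eq; rwa [Matrix.conjTranspose_eq_transpose_of_trivial] at this
    rw [ht]
    rw [show (Y *ᵥ (bb i : Fin n → ℝ)) = hY.eigenvalues i • (bb i : Fin n → ℝ) from
      hY.mulVec_eigenvectorBasis i]
    show (hY.eigenvalues i • (bb i : Fin n → ℝ)) ⬝ᵥ x = _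
    rw [smul_dotProduct, smul_eq_mul]
  have hnorm : ∀ i, 0 ≤ (x ⬝ᵥ (bb i : Fin n → ℝ)) * ((bb i : Fin n → ℝ) ⬝ᵥ x) := by
    intro i
    rw [dotProduct_comm]
    exact mul_self_nonneg _
  calc x ⬝ᵥ (Y *ᵥ x) = ∑ i, (x ⬝ᵥ (bb i : Fin n → ℝ)) *
        (hY.eigenvalues i * ((bb i : Fin n → ℝ) ⬝ᵥ x)) := by
        rw [hinner x (Y *ᵥ x)]; exact Finset.sum_congr rfl fun i _ => by rw [hev i]
    _ ≤ ∑ i, (x ⬝ᵥ (bb i : Fin n → ℝ)) * (lam * ((bb i : Fin n → ℝ) ⬝ᵥ x)) := by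
        apply Finset.sum_le_sum; intro i _
        have h0 := hnorm i
        nlinarith [hle i, h0]
    _ = lam * (x ⬝ᵥ x) := by
        rw [hinner x x, Finset.mul_sum]
        exact Finset.sum_congr rfl fun i _ => by ring

lemma psn_marg1 {α : Type*} [Fintype α] [DecidableEq α] {c : ℕ} (w : α → ℝ)
    (hw1 : ∑ S, w S = 1) (i : Fin c) (φ : α → ℝ) :
    ∑ s : Fin c → α, (∏ k, w (s k)) * φ (s i) = ∑ S, w S * φ S := by
  have key : ∀ s : Fin c → α, (∏ k, w (s k)) * φ (s i)
      = ∏ k, (w (s k) * (if k = i then φ (s k) else 1)) := by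
    intro s
    rw [Finset.prod_mul_distrib, Finset.prod_ite_eq' Finset.univ i (fun k => φ (s k))]
    simp
  simp_rw [key]
  rw [← Fintype.prod_sum (fun k S => w S * (if k = i then φ S else 1))]
  have h2 : ∀ k : Fin c, (∑ S, w S * (if k = i then φ S else 1))
      = if k = i then (∑ S, w S * φ S) else 1 := by
    intro k
    by_cases h : k = i <;> simp [h, hw1]
  simp_rw [h2]
  rw [Finset.prod_ite_eq' Finset.univ i (fun _ => ∑ S, w S * φ S)]
  simp

lemma psn_marg2 {α : Type*} [Fintype α] [DecidableEq α] {c : ℕ} (w : α → ℝ)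
    (hw1 : ∑ S, w S = 1) {i j : Fin c} (hij : i ≠ j) (φ ψ : α → ℝ) :
    ∑ s : Fin c → α, (∏ k, w (s k)) * (φ (s i) * ψ (s j))
      = (∑ S, w S * φ S) * (∑ S, w S * ψ S) := by
  have key : ∀ s : Fin c → α, (∏ k, w (s k)) * (φ (s i) * ψ (s j))
      = ∏ k, (w (s k) * ((if k = i then φ (s k) else 1) * (if k = j then ψ (s k) else 1))) := by
    intro s
    rw [Finset.prod_mul_distrib, Finset.prod_mul_distrib,
      Finset.prod_ite_eq' Finset.univ i (fun k => φ (s k)),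
      Finset.prod_ite_eq' Finset.univ j (fun k => ψ (s k))]
    simp [mul_assoc]
  simp_rw [key]
  rw [← Fintype.prod_sum (fun k S => w S * ((if k = i then φ S else 1) * (if k = j then ψ S else 1)))]
  have h2 : ∀ k : Fin c, (∑ S, w S * ((if k = i then φ S else 1) * (if k = j then ψ S else 1)))
      = (if k = i then (∑ S, w S * φ S) else 1) * (if k = j then (∑ S, w S * ψ S) else 1) := by
    intro k
    rcases eq_or_ne k i with h | h
    · subst h
      simp [hij, hw1]
    · rcases eq_or_ne k j with h' | h'
      · subst h'
        simp [h, Ne.symm hij, hw1]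
      · simp [h, h', hw1]
  simp_rw [h2]
  rw [Finset.prod_mul_distrib,
    Finset.prod_ite_eq' Finset.univ i (fun _ => ∑ S, w S * φ S),
    Finset.prod_ite_eq' Finset.univ j (fun _ => ∑ S, w S * ψ S)]
  simp

lemma psn_sum_eq_sum_subtype {n : ℕ} {S : Finset (Fin n)} (f : Fin n → ℝ)
    (hf : ∀ k, k ∉ S → f k = 0) :
    ∑ k, f k = ∑ a : {x // x ∈ S}, f ↑a := by
  rw [Finset.sum_coe_sort S f]
  exact (Finset.sum_subset (Finset.subset_univ S) (fun x _ hx => hf x hx)).symm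

section inPlace

variable {n : ℕ} {M : Matrix (Fin n) (Fin n) ℝ}

lemma inPlaceInv_zero_left {S : Finset (Fin n)} {i j : Fin n} (h : i ∉ S) :
    inPlaceInv M S i j = 0 := by simp [inPlaceInv, h]

lemma inPlaceInv_zero_right {S : Finset (Fin n)} {i j : Fin n} (h : j ∉ S) :
    inPlaceInv M S i j = 0 := by simp [inPlaceInv, h]

lemma inPlaceInv_apply {S : Finset (Fin n)} {i j : Fin n} (hi : i ∈ S) (hj : j ∈ S) :
    inPlaceInv M S i j = (M.submatrix (fun a : {x // x ∈ S} => (a : Fin n))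
      (fun a : {x // x ∈ S} => (a : Fin n)))⁻¹ ⟨i, hi⟩ ⟨j, hj⟩ := by
  simp [inPlaceInv, hi, hj]

lemma psn_posDef_sub (hM : M.PosDef) (S : Finset (Fin n)) :
    (M.submatrix (fun a : {x // x ∈ S} => (a : Fin n))
      (fun a : {x // x ∈ S} => (a : Fin n))).PosDef := by
  exact hM.submatrix Subtype.coe_injective

lemma psn_AMA (hM : M.PosDef) (S : Finset (Fin n)) :
    inPlaceInv M S * (M * inPlaceInv M S) = inPlaceInv M S := by
  set B := M.submatrix (fun a : {x // x ∈ S} => (a : Fin n))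
      (fun a : {x // x ∈ S} => (a : Fin n)) with hB
  have hBdet : IsUnit B.det := (Matrix.isUnit_iff_isUnit_det B).mp (psn_posDef_sub hM S).isUnit
  have hBB : B * B⁻¹ = 1 := Matrix.mul_nonsing_inv B hBdet
  ext i j
  by_cases hi : i ∈ S
  · by_cases hj : j ∈ S
    · have hMA : ∀ a : {x // x ∈ S}, (M * inPlaceInv M S) ↑a j = (B * B⁻¹) a ⟨j, hj⟩ := by
        intro a
        rw [Matrix.mul_apply, Matrix.mul_apply]
        rw [psn_sum_eq_sum_subtype (fun l => M ↑a l * inPlaceInv M S l j)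
          (fun l hl => by show M ↑a l * inPlaceInv M S l j = 0; rw [inPlaceInv_zero_left hl, mul_zero])]
        exact Finset.sum_congr rfl fun b _ => by rw [inPlaceInv_apply b.2 hj]; rfl
      have h1 : (inPlaceInv M S * (M * inPlaceInv M S)) i j
          = ∑ a : {x // x ∈ S}, B⁻¹ ⟨i, hi⟩ a * (B * B⁻¹) a ⟨j, hj⟩ := by
        rw [Matrix.mul_apply]
        rw [psn_sum_eq_sum_subtype (fun k => inPlaceInv M S i k * (M * inPlaceInv M S) k j)
          (fun k hk => by show inPlaceInv M S i k * (M * inPlaceInv M S) k j = 0; rw [inPlaceInv_zero_right hk, zero_mul])]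
        exact Finset.sum_congr rfl fun a _ => by rw [hMA a, inPlaceInv_apply hi a.2]
      rw [h1, inPlaceInv_apply hi hj, hBB]
      simp [Matrix.one_apply, hB]
    · rw [inPlaceInv_zero_right hj, Matrix.mul_apply]
      apply Finset.sum_eq_zero
      intro k _
      rw [Matrix.mul_apply]
      rw [Finset.sum_eq_zero (fun l _ => by rw [inPlaceInv_zero_right hj, mul_zero]), mul_zero]
  · rw [inPlaceInv_zero_left hi, Matrix.mul_apply]
    exact Finset.sum_eq_zero fun k _ => by rw [inPlaceInv_zero_left hi, zero_mul]

lemma psn_AT (hM : M.PosDef) (S : Finset (Fin n)) : (inPlaceInv M S)ᵀ = inPlaceInv M S := by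
  set B := M.submatrix (fun a : {x // x ∈ S} => (a : Fin n))
      (fun a : {x // x ∈ S} => (a : Fin n)) with hB
  have hBH : B.IsHermitian := hM.1.submatrix _
  have hBi : B⁻¹.IsHermitian := hBH.inv
  ext i j
  rw [Matrix.transpose_apply]
  by_cases hi : i ∈ S
  · by_cases hj : j ∈ S
    · rw [inPlaceInv_apply hj hi, inPlaceInv_apply hi hj]
      have := congrFun (congrFun hBi.eq ⟨i, hi⟩) ⟨j, hj⟩
      simpa [Matrix.conjTranspose_apply] using this
    · rw [inPlaceInv_zero_left hj, inPlaceInv_zero_right hj]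
  · rw [inPlaceInv_zero_right hi, inPlaceInv_zero_left hi]

end inPlace


lemma psn_dotProduct_sum {n : ℕ} {ι : Type*} (v : Fin n → ℝ) (t : Finset ι)
    (f : ι → Fin n → ℝ) : v ⬝ᵥ (∑ i ∈ t, f i) = ∑ i ∈ t, v ⬝ᵥ f i := by
  simp only [dotProduct, Finset.sum_apply, Finset.mul_sum]
  exact Finset.sum_comm

lemma psn_sum_dotProduct {n : ℕ} {ι : Type*} (t : Finset ι) (f : ι → Fin n → ℝ)
    (v : Fin n → ℝ) : (∑ i ∈ t, f i) ⬝ᵥ v = ∑ i ∈ t, f i ⬝ᵥ v := by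
  simp only [dotProduct, Finset.sum_apply, Finset.sum_mul]
  exact Finset.sum_comm

lemma psn_sum_mulVec {n : ℕ} {ι : Type*} (t : Finset ι) (A : ι → Matrix (Fin n) (Fin n) ℝ)
    (v : Fin n → ℝ) : (∑ i ∈ t, A i) *ᵥ v = ∑ i ∈ t, A i *ᵥ v := by
  classical
  induction t using Finset.induction with
  | empty => simp [Matrix.zero_mulVec]
  | insert _ _ h ih => rw [Finset.sum_insert h, Finset.sum_insert h, Matrix.add_mulVec, ih]

lemma psn_mulVec_sum {n : ℕ} {ι : Type*} (t : Finset ι) (A : Matrix (Fin n) (Fin n) ℝ)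
    (f : ι → Fin n → ℝ) : A *ᵥ (∑ i ∈ t, f i) = ∑ i ∈ t, A *ᵥ f i := by
  classical
  induction t using Finset.induction with
  | empty => simp [Matrix.mulVec_zero]
  | insert _ _ h ih => rw [Finset.sum_insert h, Finset.sum_insert h, Matrix.mulVec_add, ih]

lemma psn_mulVec_dot {n : ℕ} (A : Matrix (Fin n) (Fin n) ℝ) (v w : Fin n → ℝ) :
    (A *ᵥ v) ⬝ᵥ w = v ⬝ᵥ (Aᵀ *ᵥ w) := by
  rw [Matrix.dotProduct_mulVec v Aᵀ w, Matrix.vecMul_transpose]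

lemma psn_dot_self_nonneg {n : ℕ} (v : Fin n → ℝ) : 0 ≤ v ⬝ᵥ v :=
  Finset.sum_nonneg fun i _ => mul_self_nonneg _

set_option maxHeartbeats 2000000 in
/-- Key one-step inequality of the PSN analysis: with `z = (E[(M_Ŝ)⁻¹])^{1/2} ∇f(x)`,
`E[f(x⁺) - f(x)] ≤ -(c/b - c/(2b²))‖z‖² + λθ(c²-c)/(2b²)‖z‖² ≤ -(c/(2b))‖z‖²`
whenever `b ≥ (c-1)λθ + 1`. -/
theorem stmt7 {n : ℕ} (hn : 0 < n) (c : ℕ) (hc : 0 < c) (b : ℝ) (hbpos : 0 < b)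
    (f : (Fin n → ℝ) → ℝ) (g : (Fin n → ℝ) → (Fin n → ℝ))
    (G M : Matrix (Fin n) (Fin n) ℝ) (hG : G.PosDef) (hM : M.PosDef)
    (hGM : (M - G).PosSemidef)
    (hlower : ∀ x h, f x + (g x ⬝ᵥ h) + (1/2) * (h ⬝ᵥ (G *ᵥ h)) ≤ f (x + h))
    (hupper : ∀ x h, f (x + h) ≤ f x + (g x ⬝ᵥ h) + (1/2) * (h ⬝ᵥ (M *ᵥ h)))
    (w : Finset (Fin n) → ℝ) (hw0 : ∀ S, 0 ≤ w S)
    (hw1 : ∑ S : Finset (Fin n), w S = 1) (hvac : w ∅ = 0)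
    (hprop : ∀ i : Fin n,
      0 < ∑ S ∈ Finset.univ.filter (fun S : Finset (Fin n) => i ∈ S), w S)
    (EM X Y : Matrix (Fin n) (Fin n) ℝ)
    (hEMdef : EM = ∑ S : Finset (Fin n), w S • inPlaceInv M S)
    (hEM : EM.PosSemidef)
    (hXdef : X = hG.posSemidef.sqrt * EM * hG.posSemidef.sqrt)
    (hYdef : Y = (hG.posSemidef.sqrt)⁻¹ * M * (hG.posSemidef.sqrt)⁻¹)
    (hX : X.IsHermitian) (hY : Y.IsHermitian)
    (lam θ : ℝ)
    (hlam : lam = ⨆ i, hY.eigenvalues i)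
    (hθ : θ = ⨆ i, hX.eigenvalues i)
    (hb : ((c : ℝ) - 1) * lam * θ + 1 ≤ b)
    (x : Fin n → ℝ) (z : Fin n → ℝ) (hz : z = hEM.sqrt *ᵥ g x) :
    (∑ s : Fin c → Finset (Fin n), (∏ i, w (s i)) *
        (f (x - (1/b) • ∑ i, (inPlaceInv M (s i)) *ᵥ g x) - f x)) ≤
      -((c : ℝ)/b - (c : ℝ)/(2*b^2)) * (z ⬝ᵥ z) +
        lam * θ * ((c : ℝ)^2 - (c : ℝ))/(2*b^2) * (z ⬝ᵥ z) ∧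
    -((c : ℝ)/b - (c : ℝ)/(2*b^2)) * (z ⬝ᵥ z) +
        lam * θ * ((c : ℝ)^2 - (c : ℝ))/(2*b^2) * (z ⬝ᵥ z) ≤
      -((c : ℝ)/(2*b)) * (z ⬝ᵥ z) := by
  haveI : Nonempty (Fin n) := Fin.pos_iff_nonempty.mp hn
  have hc1 : (1 : ℝ) ≤ (c : ℝ) := by exact_mod_cast hc
  set g0 : Fin n → ℝ := g x with hg0
  set P : Matrix (Fin n) (Fin n) ℝ := hG.posSemidef.sqrt with hPdef
  set R : Matrix (Fin n) (Fin n) ℝ := hEM.sqrt with hRdef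
  set u : Fin n → ℝ := EM *ᵥ g0 with hudef
  set zz : ℝ := z ⬝ᵥ z with hzzdef
  set q : ℝ := g0 ⬝ᵥ u with hqdef
  set r : ℝ := u ⬝ᵥ (M *ᵥ u) with hrdef
  -- symmetric-matrix basics
  have hPT : Pᵀ = P := by
    have := hG.posSemidef.posSemidef_sqrt.1
    rwa [Matrix.IsHermitian, Matrix.conjTranspose_eq_transpose_of_trivial] at this
  have hRT : Rᵀ = R := by
    have := hEM.posSemidef_sqrt.1
    rwa [Matrix.IsHermitian, Matrix.conjTranspose_eq_transpose_of_trivial] at this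
  have hPP : P * P = G := hG.posSemidef.sqrt_mul_self
  have hRR : R * R = EM := hEM.sqrt_mul_self
  have hzz0 : 0 ≤ zz := psn_dot_self_nonneg z
  have huz : u = R *ᵥ z := by
    rw [hudef, hz, ← hRR, ← Matrix.mulVec_mulVec]
  have hq : q = zz := by
    rw [hqdef, hzzdef, hudef, ← hRR, ← Matrix.mulVec_mulVec, hz,
      Matrix.dotProduct_mulVec g0 R, ← Matrix.mulVec_transpose, hRT]
  -- u as a weighted sum
  have huS : u = ∑ S : Finset (Fin n), w S • (inPlaceInv M S *ᵥ g0) := by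
    rw [hudef, hEMdef, psn_sum_mulVec]
    exact Finset.sum_congr rfl fun S _ => Matrix.smul_mulVec (w S) (inPlaceInv M S) g0
  have hup : ∀ p, u p = ∑ S : Finset (Fin n), w S * ((inPlaceInv M S *ᵥ g0) p) := by
    intro p
    rw [huS]
    simp [Finset.sum_apply]
  have hφq : ∑ S : Finset (Fin n), w S * (g0 ⬝ᵥ (inPlaceInv M S *ᵥ g0)) = q := by
    rw [hqdef, huS, psn_dotProduct_sum]
    exact Finset.sum_congr rfl fun S _ => by rw [dotProduct_smul, smul_eq_mul]
  -- diagonal identity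
  have hdiag : ∀ S : Finset (Fin n),
      (inPlaceInv M S *ᵥ g0) ⬝ᵥ (M *ᵥ (inPlaceInv M S *ᵥ g0)) = g0 ⬝ᵥ (inPlaceInv M S *ᵥ g0) := by
    intro S
    rw [psn_mulVec_dot, psn_AT hM S, Matrix.mulVec_mulVec, Matrix.mulVec_mulVec,
      show inPlaceInv M S * M * inPlaceInv M S = inPlaceInv M S from by
        rw [Matrix.mul_assoc]; exact psn_AMA hM S]
  -- marginals
  have hmlin : ∀ i : Fin c,
      ∑ s : Fin c → Finset (Fin n), (∏ k, w (s k)) * (g0 ⬝ᵥ (inPlaceInv M (s i) *ᵥ g0)) = q := by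
    intro i
    rw [psn_marg1 w hw1 i (fun S => g0 ⬝ᵥ (inPlaceInv M S *ᵥ g0)), hφq]
  have hmdiag : ∀ i : Fin c,
      ∑ s : Fin c → Finset (Fin n), (∏ k, w (s k)) *
        ((inPlaceInv M (s i) *ᵥ g0) ⬝ᵥ (M *ᵥ (inPlaceInv M (s i) *ᵥ g0))) = q := by
    intro i
    rw [← hmlin i]
    exact Finset.sum_congr rfl fun s _ => by rw [hdiag (s i)]
  have hmoff : ∀ i j : Fin c, i ≠ j →
      ∑ s : Fin c → Finset (Fin n), (∏ k, w (s k)) *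
        ((inPlaceInv M (s i) *ᵥ g0) ⬝ᵥ (M *ᵥ (inPlaceInv M (s j) *ᵥ g0))) = r := by
    intro i j hij
    have hψ : ∀ S T : Finset (Fin n), (inPlaceInv M S *ᵥ g0) ⬝ᵥ (M *ᵥ (inPlaceInv M T *ᵥ g0))
        = ∑ p, ∑ l, M p l * ((inPlaceInv M S *ᵥ g0) p * (inPlaceInv M T *ᵥ g0) l) := by
      intro S T
      calc (inPlaceInv M S *ᵥ g0) ⬝ᵥ (M *ᵥ (inPlaceInv M T *ᵥ g0))
          = ∑ p, (inPlaceInv M S *ᵥ g0) p * ∑ l, M p l * (inPlaceInv M T *ᵥ g0) l := rfl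
        _ = ∑ p, ∑ l, M p l * ((inPlaceInv M S *ᵥ g0) p * (inPlaceInv M T *ᵥ g0) l) := by
            refine Finset.sum_congr rfl fun p _ => ?_
            rw [Finset.mul_sum]
            exact Finset.sum_congr rfl fun l _ => by ring
    calc ∑ s : Fin c → Finset (Fin n), (∏ k, w (s k)) *
          ((inPlaceInv M (s i) *ᵥ g0) ⬝ᵥ (M *ᵥ (inPlaceInv M (s j) *ᵥ g0)))
        = ∑ s : Fin c → Finset (Fin n), ∑ p, ∑ l,
            M p l * ((∏ k, w (s k)) * ((inPlaceInv M (s i) *ᵥ g0) p *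
              (inPlaceInv M (s j) *ᵥ g0) l)) := by
          refine Finset.sum_congr rfl fun s _ => ?_
          rw [hψ, Finset.mul_sum]
          refine Finset.sum_congr rfl fun p _ => ?_
          rw [Finset.mul_sum]
          exact Finset.sum_congr rfl fun l _ => by ring
      _ = ∑ p, ∑ l, ∑ s : Fin c → Finset (Fin n),
            M p l * ((∏ k, w (s k)) * ((inPlaceInv M (s i) *ᵥ g0) p *
              (inPlaceInv M (s j) *ᵥ g0) l)) := by
          rw [Finset.sum_comm]
          exact Finset.sum_congr rfl fun p _ => Finset.sum_comm
      _ = ∑ p, ∑ l, M p l * (u p * u l) := by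
          refine Finset.sum_congr rfl fun p _ => Finset.sum_congr rfl fun l _ => ?_
          rw [← Finset.mul_sum]
          congr 1
          rw [psn_marg2 w hw1 hij (fun S => (inPlaceInv M S *ᵥ g0) p)
            (fun T => (inPlaceInv M T *ᵥ g0) l), ← hup p, ← hup l]
      _ = r := by
          rw [hrdef]
          calc ∑ p, ∑ l, M p l * (u p * u l)
              = ∑ p, u p * ∑ l, M p l * u l := by
                refine Finset.sum_congr rfl fun p _ => ?_
                rw [Finset.mul_sum]
                exact Finset.sum_congr rfl fun l _ => by ring
            _ = u ⬝ᵥ (M *ᵥ u) := rfl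
  -- pointwise quadratic upper bound
  have hstep : ∀ s : Fin c → Finset (Fin n),
      f (x - (1/b) • ∑ i, (inPlaceInv M (s i)) *ᵥ g0) - f x ≤
        (-(1/b)) * ∑ i, g0 ⬝ᵥ (inPlaceInv M (s i) *ᵥ g0) +
        (1/(2*b^2)) * ∑ i, ∑ j, (inPlaceInv M (s i) *ᵥ g0) ⬝ᵥ
          (M *ᵥ (inPlaceInv M (s j) *ᵥ g0)) := by
    intro s
    set V : Fin n → ℝ := ∑ i, inPlaceInv M (s i) *ᵥ g0 with hV
    have hsub : x - (1/b) • V = x + ((-(1/b)) • V) := by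
      rw [neg_smul, sub_eq_add_neg]
    have hup2 := hupper x ((-(1/b)) • V)
    rw [← hsub, ← hg0] at hup2
    have e1 : g0 ⬝ᵥ ((-(1/b)) • V) = (-(1/b)) * ∑ i, g0 ⬝ᵥ (inPlaceInv M (s i) *ᵥ g0) := by
      rw [dotProduct_smul, smul_eq_mul, hV, psn_dotProduct_sum]
    have e3 : V ⬝ᵥ (M *ᵥ V) = ∑ i, ∑ j, (inPlaceInv M (s i) *ᵥ g0) ⬝ᵥ
        (M *ᵥ (inPlaceInv M (s j) *ᵥ g0)) := by
      rw [hV, psn_mulVec_sum, psn_sum_dotProduct]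
      exact Finset.sum_congr rfl fun i _ => psn_dotProduct_sum _ _ _
    have e2 : ((-(1/b)) • V) ⬝ᵥ (M *ᵥ ((-(1/b)) • V))
        = (1/b^2) * (V ⬝ᵥ (M *ᵥ V)) := by
      rw [Matrix.mulVec_smul, smul_dotProduct, dotProduct_smul,
        smul_eq_mul, smul_eq_mul]
      ring
    rw [e1, e2, e3] at hup2
    have e4 : (1/2 : ℝ) * ((1/b^2) * (∑ i, ∑ j, (inPlaceInv M (s i) *ᵥ g0) ⬝ᵥ
        (M *ᵥ (inPlaceInv M (s j) *ᵥ g0))))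
        = (1/(2*b^2)) * ∑ i, ∑ j, (inPlaceInv M (s i) *ᵥ g0) ⬝ᵥ
          (M *ᵥ (inPlaceInv M (s j) *ᵥ g0)) := by ring
    rw [e4] at hup2
    linarith
  -- the double-index marginal values
  have hijval : ∀ i j : Fin c, ∑ s : Fin c → Finset (Fin n), (∏ k, w (s k)) *
      ((inPlaceInv M (s i) *ᵥ g0) ⬝ᵥ (M *ᵥ (inPlaceInv M (s j) *ᵥ g0)))
      = if i = j then q else r := by
    intro i j
    by_cases h : i = j
    · subst h; rw [if_pos rfl]; exact hmdiag i
    · rw [if_neg h]; exact hmoff i j h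
  have hdouble : ∑ i : Fin c, ∑ j : Fin c, (if i = j then q else r)
      = (c : ℝ) * q + ((c : ℝ)^2 - c) * r := by
    have hrow : ∀ i : Fin c, ∑ j : Fin c, (if i = j then q else r)
        = q + ((c : ℝ) - 1) * r := by
      intro i
      calc ∑ j : Fin c, (if i = j then q else r)
          = ∑ j : Fin c, ((if i = j then q - r else 0) + r) := by
            refine Finset.sum_congr rfl fun j _ => ?_
            by_cases h : i = j <;> simp [h]
        _ = q + ((c : ℝ) - 1) * r := by
            rw [Finset.sum_add_distrib, Finset.sum_ite_eq, Finset.sum_const,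
              Finset.card_univ, Fintype.card_fin, nsmul_eq_mul]
            simp only [Finset.mem_univ, if_pos]
            ring
    rw [Finset.sum_congr rfl fun i _ => hrow i, Finset.sum_const, Finset.card_univ,
      Fintype.card_fin, nsmul_eq_mul]
    ring
  -- total expectation of the quadratic bound
  have hsum : ∑ s : Fin c → Finset (Fin n), (∏ k, w (s k)) *
      ((-(1/b)) * ∑ i, g0 ⬝ᵥ (inPlaceInv M (s i) *ᵥ g0) +
        (1/(2*b^2)) * ∑ i, ∑ j, (inPlaceInv M (s i) *ᵥ g0) ⬝ᵥ
          (M *ᵥ (inPlaceInv M (s j) *ᵥ g0)))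
      = (-(1/b)) * ((c : ℝ) * q) + (1/(2*b^2)) * ((c : ℝ) * q + ((c : ℝ)^2 - c) * r) := by
    have split : ∀ s : Fin c → Finset (Fin n), (∏ k, w (s k)) *
        ((-(1/b)) * ∑ i, g0 ⬝ᵥ (inPlaceInv M (s i) *ᵥ g0) +
          (1/(2*b^2)) * ∑ i, ∑ j, (inPlaceInv M (s i) *ᵥ g0) ⬝ᵥ
            (M *ᵥ (inPlaceInv M (s j) *ᵥ g0)))
        = (-(1/b)) * (∑ i, (∏ k, w (s k)) * (g0 ⬝ᵥ (inPlaceInv M (s i) *ᵥ g0))) +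
          (1/(2*b^2)) * (∑ i, ∑ j, (∏ k, w (s k)) * ((inPlaceInv M (s i) *ᵥ g0) ⬝ᵥ
            (M *ᵥ (inPlaceInv M (s j) *ᵥ g0)))) := by
      intro s
      have t1 : (-(1/b)) * (∑ i, (∏ k, w (s k)) * (g0 ⬝ᵥ (inPlaceInv M (s i) *ᵥ g0)))
          = (∏ k, w (s k)) * ((-(1/b)) * ∑ i, g0 ⬝ᵥ (inPlaceInv M (s i) *ᵥ g0)) := by
        rw [← Finset.mul_sum]
        ring
      have t2 : (1/(2*b^2)) * (∑ i, ∑ j, (∏ k, w (s k)) * ((inPlaceInv M (s i) *ᵥ g0) ⬝ᵥ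
            (M *ᵥ (inPlaceInv M (s j) *ᵥ g0))))
          = (∏ k, w (s k)) * ((1/(2*b^2)) * ∑ i, ∑ j, (inPlaceInv M (s i) *ᵥ g0) ⬝ᵥ
            (M *ᵥ (inPlaceInv M (s j) *ᵥ g0))) := by
        rw [Finset.sum_congr rfl fun i (_ : i ∈ Finset.univ) =>
          (Finset.mul_sum Finset.univ (fun j => (inPlaceInv M (s i) *ᵥ g0) ⬝ᵥ
            (M *ᵥ (inPlaceInv M (s j) *ᵥ g0))) (∏ k, w (s k))).symm, ← Finset.mul_sum]
        ring
      rw [mul_add, ← t1, ← t2]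
    rw [Finset.sum_congr rfl fun s _ => split s, Finset.sum_add_distrib,
      ← Finset.mul_sum, ← Finset.mul_sum]
    congr 1
    · congr 1
      rw [Finset.sum_comm]
      rw [Finset.sum_congr rfl fun i _ => hmlin i, Finset.sum_const, Finset.card_univ,
        Fintype.card_fin, nsmul_eq_mul]
    · congr 1
      rw [Finset.sum_comm]
      calc ∑ i : Fin c, ∑ s : Fin c → Finset (Fin n), ∑ j : Fin c, (∏ k, w (s k)) *
            ((inPlaceInv M (s i) *ᵥ g0) ⬝ᵥ (M *ᵥ (inPlaceInv M (s j) *ᵥ g0)))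
          = ∑ i : Fin c, ∑ j : Fin c, ∑ s : Fin c → Finset (Fin n), (∏ k, w (s k)) *
            ((inPlaceInv M (s i) *ᵥ g0) ⬝ᵥ (M *ᵥ (inPlaceInv M (s j) *ᵥ g0))) := by
            exact Finset.sum_congr rfl fun i _ => Finset.sum_comm
        _ = ∑ i : Fin c, ∑ j : Fin c, (if i = j then q else r) := by
            exact Finset.sum_congr rfl fun i _ => Finset.sum_congr rfl fun j _ => hijval i j
        _ = (c : ℝ) * q + ((c : ℝ)^2 - c) * r := hdouble
  -- first main inequality chain
  have hineq1 : (∑ s : Fin c → Finset (Fin n), (∏ i, w (s i)) *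
      (f (x - (1/b) • ∑ i, (inPlaceInv M (s i)) *ᵥ g0) - f x)) ≤
      (-(1/b)) * ((c : ℝ) * q) + (1/(2*b^2)) * ((c : ℝ) * q + ((c : ℝ)^2 - c) * r) := by
    rw [← hsum]
    refine Finset.sum_le_sum fun s _ => ?_
    exact mul_le_mul_of_nonneg_left (hstep s) (Finset.prod_nonneg fun k _ => hw0 (s k))
  -- spectral bounds
  have hPdet : IsUnit P.det := by
    have hdet : P.det * P.det = G.det := by rw [← Matrix.det_mul, hPP]
    have hGdet := hG.det_pos
    have hne : P.det ≠ 0 := by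
      intro h
      rw [h, mul_zero] at hdet
      exact (ne_of_gt hGdet) hdet.symm
    exact isUnit_iff_ne_zero.mpr hne
  have hPiP : P⁻¹ * P = 1 := Matrix.nonsing_inv_mul P hPdet
  have hPPi : P * P⁻¹ = 1 := Matrix.mul_nonsing_inv P hPdet
  have hMPYP : P * Y * P = M := by
    rw [hYdef]
    simp only [Matrix.mul_assoc]
    rw [hPiP, Matrix.mul_one, ← Matrix.mul_assoc, hPPi, Matrix.one_mul]
  have hPinvH : (P⁻¹)ᴴ = P⁻¹ := by
    rw [Matrix.conjTranspose_nonsing_inv]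
    rw [show Pᴴ = P from hG.posSemidef.posSemidef_sqrt.1]
  have hYpsd : Y.PosSemidef := by
    rw [hYdef]
    have h1 := (hM.posSemidef).conjTranspose_mul_mul_same P⁻¹
    rwa [hPinvH] at h1
  have hXpsd : X.PosSemidef := by
    rw [hXdef]
    have h1 := hEM.mul_mul_conjTranspose_same P
    rwa [show Pᴴ = P from hG.posSemidef.posSemidef_sqrt.1] at h1
  have hθ0 : 0 ≤ θ := by
    rw [hθ]
    have h0 : 0 ≤ hX.eigenvalues ⟨0, hn⟩ := hXpsd.eigenvalues_nonneg ⟨0, hn⟩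
    exact le_trans h0 (le_ciSup (Set.Finite.bddAbove (Set.finite_range _)) _)
  have hlam0 : 0 ≤ lam := by
    rw [hlam]
    have h0 : 0 ≤ hY.eigenvalues ⟨0, hn⟩ := hYpsd.eigenvalues_nonneg ⟨0, hn⟩
    exact le_trans h0 (le_ciSup (Set.Finite.bddAbove (Set.finite_range _)) _)
  have hra : r ≤ lam * (u ⬝ᵥ (G *ᵥ u)) := by
    have h1 : (P *ᵥ u) ⬝ᵥ (Y *ᵥ (P *ᵥ u)) = r := by
      rw [psn_mulVec_dot, hPT, Matrix.mulVec_mulVec, Matrix.mulVec_mulVec, hMPYP, hrdef]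
    have h2 := psn_rayleigh hY (P *ᵥ u)
    rw [← hlam, h1] at h2
    have h3 : (P *ᵥ u) ⬝ᵥ (P *ᵥ u) = u ⬝ᵥ (G *ᵥ u) := by
      rw [psn_mulVec_dot, hPT, Matrix.mulVec_mulVec, hPP]
    rw [h3] at h2
    exact h2
  -- the θ bound
  have hbnd : u ⬝ᵥ (G *ᵥ u) ≤ θ * zz := by
    set C : Matrix (Fin n) (Fin n) ℝ := P * R with hC
    have hCT : Cᵀ = R * P := by rw [hC, Matrix.transpose_mul, hPT, hRT]
    have hXC : X = C * Cᵀ := by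
      rw [hXdef, hCT, hC, ← hRR, ← Matrix.mul_assoc P R R, Matrix.mul_assoc (P*R) R P]
    set v : Fin n → ℝ := C *ᵥ z with hv
    set t : ℝ := v ⬝ᵥ v with ht
    have ht0 : 0 ≤ t := psn_dot_self_nonneg v
    have hgu : u ⬝ᵥ (G *ᵥ u) = t := by
      have lhs : u ⬝ᵥ (G *ᵥ u) = z ⬝ᵥ ((Cᵀ * C) *ᵥ z) := by
        rw [huz, psn_mulVec_dot, hRT, Matrix.mulVec_mulVec, Matrix.mulVec_mulVec,
          show R * G * R = Cᵀ * C from by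
            rw [hCT, hC, ← hPP, ← Matrix.mul_assoc R P P, Matrix.mul_assoc (R*P) P R]]
      have rhs : t = z ⬝ᵥ ((Cᵀ * C) *ᵥ z) := by
        rw [ht, hv, psn_mulVec_dot C z (C *ᵥ z), Matrix.mulVec_mulVec]
      rw [lhs, rhs]
    have hXray : (Cᵀ *ᵥ v) ⬝ᵥ (Cᵀ *ᵥ v) ≤ θ * t := by
      have h1 := psn_rayleigh hX v
      rw [← hθ] at h1
      have h2 : (Cᵀ *ᵥ v) ⬝ᵥ (Cᵀ *ᵥ v) = v ⬝ᵥ (X *ᵥ v) := by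
        rw [psn_mulVec_dot Cᵀ v (Cᵀ *ᵥ v), Matrix.transpose_transpose,
          Matrix.mulVec_mulVec, hXC]
      calc (Cᵀ *ᵥ v) ⬝ᵥ (Cᵀ *ᵥ v) = v ⬝ᵥ (X *ᵥ v) := h2
        _ ≤ θ * (v ⬝ᵥ v) := h1
        _ = θ * t := by rw [← ht]
    have hcs := Finset.sum_mul_sq_le_sq_mul_sq Finset.univ z (Cᵀ *ᵥ v)
    have hdot1 : ∑ i, z i * (Cᵀ *ᵥ v) i = t := by
      have h5 : z ⬝ᵥ (Cᵀ *ᵥ v) = t := by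
        rw [← psn_mulVec_dot C z v]
      exact h5
    have hdot2 : ∑ i, z i ^ 2 = zz := by
      rw [hzzdef]
      exact Finset.sum_congr rfl fun i _ => pow_two (z i)
    have hdot3 : ∑ i, ((Cᵀ *ᵥ v) i) ^ 2 = (Cᵀ *ᵥ v) ⬝ᵥ (Cᵀ *ᵥ v) :=
      Finset.sum_congr rfl fun i _ => pow_two _
    rw [hdot1, hdot2, hdot3] at hcs
    -- hcs : t ^ 2 ≤ zz * ((Cᵀ v) ⬝ (Cᵀ v))
    have hts : t ^ 2 ≤ zz * (θ * t) :=
      le_trans hcs (mul_le_mul_of_nonneg_left hXray hzz0)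
    rcases eq_or_lt_of_le ht0 with h | h
    · rw [hgu, ← h]
      exact mul_nonneg hθ0 hzz0
    · have hmul : t * t ≤ (θ * zz) * t := by nlinarith
      have := le_of_mul_le_mul_right hmul h
      rw [hgu]
      linarith
  have hrb : r ≤ lam * θ * zz := by
    calc r ≤ lam * (u ⬝ᵥ (G *ᵥ u)) := hra
      _ ≤ lam * (θ * zz) := mul_le_mul_of_nonneg_left hbnd hlam0
      _ = lam * θ * zz := by ring
  constructor
  · -- first inequality
    have hcoef : 0 ≤ ((c : ℝ)^2 - c) / (2*b^2) := by
      apply div_nonneg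
      · nlinarith
      · positivity
    have hkey : ((c : ℝ)^2 - c)/(2*b^2) * r ≤ ((c : ℝ)^2 - c)/(2*b^2) * (lam * θ * zz) :=
      mul_le_mul_of_nonneg_left hrb hcoef
    have heq1 : (-(1/b)) * ((c : ℝ) * q) + (1/(2*b^2)) * ((c : ℝ) * q + ((c : ℝ)^2 - c) * r)
        = -((c : ℝ)/b - (c : ℝ)/(2*b^2)) * zz + ((c : ℝ)^2 - c)/(2*b^2) * r := by
      have hbne : b ≠ 0 := ne_of_gt hbpos
      rw [hq]
      field_simp
      ring
    have heq2 : lam * θ * ((c : ℝ)^2 - (c : ℝ))/(2*b^2) * zz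
        = ((c : ℝ)^2 - c)/(2*b^2) * (lam * θ * zz) := by ring
    rw [heq2]
    linarith only [hineq1, heq1, hkey]
  · -- second inequality
    have h0 : ((c : ℝ) - 1) * lam * θ ≤ b - 1 := by linarith
    have h1 : (c : ℝ) * (((c : ℝ) - 1) * lam * θ) ≤ (c : ℝ) * (b - 1) := by
      apply mul_le_mul_of_nonneg_left h0
      positivity
    have heq : -((c : ℝ)/(2*b)) * zz - (-((c : ℝ)/b - (c : ℝ)/(2*b^2)) * zz +
        lam * θ * ((c : ℝ)^2 - (c : ℝ))/(2*b^2) * zz)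
        = (((c : ℝ) * (b - 1) - (c : ℝ) * (((c : ℝ) - 1) * lam * θ))/(2*b^2)) * zz := by
      have hbne : b ≠ 0 := ne_of_gt hbpos
      field_simp
      ring
    have hnn : 0 ≤ (((c : ℝ) * (b - 1) - (c : ℝ) * (((c : ℝ) - 1) * lam * θ))/(2*b^2)) * zz :=
      mul_nonneg (div_nonneg (by linarith only [h1]) (by positivity)) hzz0
    linarith only [heq, hnn]
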